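/- Let A be a nonzero polynomial in F_2[x]. Then there exist a positive integer m and nonnegative integers p_1, p_2 with p_2 = p_1 + 2 such that for every k ≥ m: deg(A_{2k+1}) = p_1, deg(A_{2k}) = p_2, and a_{2k} = b_{2k} = 1. -/
import Mathlib


open Polynomial Finset

/-- The polynomial `M = x^2 + x + 1` over `F_2`. -/
noncomputable def M : Polynomial (ZMod 2) := X ^ 2 + X + 1

/-- The odd part of a binary polynomial: `P` divided by `x^{val_x(P)} (x+1)^{val_{x+1}(P)}`. -/
noncomputable def oddPart (P : Polynomial (ZMod 2)) : Polynomial (ZMod 2) :=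
  P / (X ^ P.rootMultiplicity 0 * (X + 1) ^ P.rootMultiplicity 1)

/-- The Collatz sequence of a binary polynomial `A`:
`A_0 = A`, `A_{2k+1} = oddPart A_{2k}`, `A_{2k+2} = 1 + M * A_{2k+1}`. -/
noncomputable def collatz (A : Polynomial (ZMod 2)) : ℕ → Polynomial (ZMod 2)
  | 0 => A
  | n + 1 => if n % 2 = 0 then oddPart (collatz A n) else 1 + M * collatz A n

/-- `a_k`: the multiplicity of `x` in `A_k`. -/
noncomputable def aSeq (A : Polynomial (ZMod 2)) (k : ℕ) : ℕ :=
  (collatz A k).rootMultiplicity 0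

/-- `b_k`: the multiplicity of `x + 1` in `A_k`. -/
noncomputable def bSeq (A : Polynomial (ZMod 2)) (k : ℕ) : ℕ :=
  (collatz A k).rootMultiplicity 1

/-- The length `ℓ_A = m + 1`, where `m` is the least nonnegative integer
with `A_{2m+1} = 1`. -/
noncomputable def collatzLength (A : Polynomial (ZMod 2)) : ℕ :=
  sInf {m : ℕ | collatz A (2 * m + 1) = 1} + 1

lemma zmod2_ne_zero (u : ZMod 2) (h : u ≠ 0) : u = 1 := by revert h; revert u; decide

lemma X_sub_C_one : (X : Polynomial (ZMod 2)) - 1 = X + 1 := by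
  rw [sub_eq_add_neg, CharTwo.neg_eq]

lemma coprime_X_X_add_one : IsCoprime (X : Polynomial (ZMod 2)) (X + 1) := by
  refine ⟨1, 1, ?_⟩
  have : (2 : Polynomial (ZMod 2)) = 0 := CharTwo.two_eq_zero
  linear_combination X * this

lemma M_natDegree : M.natDegree = 2 := by unfold M; compute_degree!

lemma M_ne_zero : M ≠ 0 := fun h => by simpa [h, M_natDegree] using M_natDegree.symm

/-- The factorization property of `oddPart`. -/
lemma oddPart_spec (P : Polynomial (ZMod 2)) (hP : P ≠ 0) :
    X ^ P.rootMultiplicity 0 * (X + 1) ^ P.rootMultiplicity 1 * oddPart P = P := by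
  have h1 : (X : Polynomial (ZMod 2)) ^ P.rootMultiplicity 0 ∣ P := by
    simpa using pow_rootMultiplicity_dvd P 0
  have h2 : ((X : Polynomial (ZMod 2)) + 1) ^ P.rootMultiplicity 1 ∣ P := by
    simpa [X_sub_C_one] using pow_rootMultiplicity_dvd P 1
  have hcop : IsCoprime ((X : Polynomial (ZMod 2)) ^ P.rootMultiplicity 0)
      ((X + 1) ^ P.rootMultiplicity 1) := (coprime_X_X_add_one.pow)
  have hdvd := hcop.mul_dvd h1 h2
  have hne : (X : Polynomial (ZMod 2)) ^ P.rootMultiplicity 0 *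
      (X + 1) ^ P.rootMultiplicity 1 ≠ 0 := by
    apply mul_ne_zero <;> apply pow_ne_zero
    · exact X_ne_zero
    · intro h
      have := congrArg (Polynomial.eval 0) h
      simp at this
  exact EuclideanDomain.mul_div_cancel' hne hdvd

lemma oddPart_ne_zero (P : Polynomial (ZMod 2)) (hP : P ≠ 0) : oddPart P ≠ 0 := by
  intro h
  rw [← oddPart_spec P hP, h, mul_zero] at hP
  exact hP rfl

lemma rm_X_add_one_zero (n : ℕ) : rootMultiplicity (0 : ZMod 2) (((X:Polynomial (ZMod 2)) + 1) ^ n) = 0 := by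
  apply rootMultiplicity_eq_zero
  simp [IsRoot]

lemma rm_X_one (n : ℕ) : rootMultiplicity (1 : ZMod 2) ((X:Polynomial (ZMod 2)) ^ n) = 0 := by
  apply rootMultiplicity_eq_zero
  simp [IsRoot]

lemma oddPart_eval (P : Polynomial (ZMod 2)) (hP : P ≠ 0) :
    (oddPart P).eval 0 = 1 ∧ (oddPart P).eval 1 = 1 := by
  have hQ := oddPart_ne_zero P hP
  have hfac := oddPart_spec P hP
  constructor
  · apply zmod2_ne_zero
    intro h
    have hroot : 0 < rootMultiplicity (0 : ZMod 2) (oddPart P) :=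
      (rootMultiplicity_pos hQ).2 h
    have hprod : (X:Polynomial (ZMod 2)) ^ P.rootMultiplicity 0 *
        (X + 1) ^ P.rootMultiplicity 1 * oddPart P ≠ 0 := by rw [oddPart_spec P hP]; exact hP
    have h2 := rootMultiplicity_mul (x := (0 : ZMod 2)) hprod
    rw [rootMultiplicity_mul (x := (0 : ZMod 2)) (left_ne_zero_of_mul hprod)] at h2
    have hx : rootMultiplicity (0 : ZMod 2) ((X:Polynomial (ZMod 2)) ^ P.rootMultiplicity 0)
        = P.rootMultiplicity 0 := by
      simpa using rootMultiplicity_X_sub_C_pow (a := (0 : ZMod 2)) (n := P.rootMultiplicity 0)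
    rw [oddPart_spec P hP, hx, rm_X_add_one_zero] at h2
    omega
  · apply zmod2_ne_zero
    intro h
    have hroot : 0 < rootMultiplicity (1 : ZMod 2) (oddPart P) :=
      (rootMultiplicity_pos hQ).2 h
    have hprod : (X:Polynomial (ZMod 2)) ^ P.rootMultiplicity 0 *
        (X + 1) ^ P.rootMultiplicity 1 * oddPart P ≠ 0 := by rw [oddPart_spec P hP]; exact hP
    have h2 := rootMultiplicity_mul (x := (1 : ZMod 2)) hprod
    rw [rootMultiplicity_mul (x := (1 : ZMod 2)) (left_ne_zero_of_mul hprod)] at h2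
    have hx : rootMultiplicity (1 : ZMod 2) (((X:Polynomial (ZMod 2)) + 1) ^ P.rootMultiplicity 1)
        = P.rootMultiplicity 1 := by
      rw [← X_sub_C_one]
      simpa using rootMultiplicity_X_sub_C_pow (a := (1 : ZMod 2)) (n := P.rootMultiplicity 1)
    rw [oddPart_spec P hP, hx, rm_X_one] at h2
    omega

lemma oddPart_natDegree (P : Polynomial (ZMod 2)) (hP : P ≠ 0) :
    P.natDegree = P.rootMultiplicity 0 + P.rootMultiplicity 1 + (oddPart P).natDegree := by
  have hQ := oddPart_ne_zero P hP
  have hx : ((X:Polynomial (ZMod 2)) ^ P.rootMultiplicity 0) ≠ 0 := pow_ne_zero _ X_ne_zero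
  have hx1 : (((X:Polynomial (ZMod 2)) + 1) ^ P.rootMultiplicity 1) ≠ 0 := by
    apply pow_ne_zero
    intro h
    have := congrArg (Polynomial.eval 0) h
    simp at this
  conv_lhs => rw [← oddPart_spec P hP]
  rw [natDegree_mul (mul_ne_zero hx hx1) hQ, natDegree_mul hx hx1]
  have hdx : ((X:Polynomial (ZMod 2)) ^ P.rootMultiplicity 0).natDegree = P.rootMultiplicity 0 := by
    simp [natDegree_pow]
  have hdx1 : (((X:Polynomial (ZMod 2)) + 1) ^ P.rootMultiplicity 1).natDegree = P.rootMultiplicity 1 := by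
    rw [natDegree_pow]
    have : ((X:Polynomial (ZMod 2)) + 1).natDegree = 1 := by compute_degree!
    rw [this, mul_one]
  rw [hdx, hdx1]

lemma step_natDegree (Q : Polynomial (ZMod 2)) (hQ : Q ≠ 0) :
    (1 + M * Q).natDegree = Q.natDegree + 2 := by
  have hMQ : (M * Q).natDegree = Q.natDegree + 2 := by
    rw [natDegree_mul M_ne_zero hQ, M_natDegree]; ring
  rw [natDegree_add_eq_right_of_natDegree_lt (by simp [hMQ])]
  exact hMQ

lemma step_ne_zero (Q : Polynomial (ZMod 2)) (hQ : Q ≠ 0) : 1 + M * Q ≠ 0 := by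
  intro h
  have := step_natDegree Q hQ
  rw [h] at this
  simp at this

lemma step_roots (Q : Polynomial (ZMod 2)) (h0 : Q.eval 0 = 1) (h1 : Q.eval 1 = 1) :
    (1 + M * Q).eval 0 = 0 ∧ (1 + M * Q).eval 1 = 0 := by
  constructor <;> simp [M, h0, h1] <;> decide

/-- The main invariant: at odd indices the polynomial is odd and nonzero. -/
lemma collatz_odd (A : Polynomial (ZMod 2)) (hA : A ≠ 0) (k : ℕ) :
    collatz A (2 * k + 1) ≠ 0 ∧ (collatz A (2 * k + 1)).eval 0 = 1 ∧
      (collatz A (2 * k + 1)).eval 1 = 1 ∧ collatz A (2 * k + 2) ≠ 0 := by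
  induction k with
  | zero =>
    have h1 : collatz A 1 = oddPart A := by simp [collatz]
    have hne : collatz A 1 ≠ 0 := h1 ▸ oddPart_ne_zero A hA
    have h2 : collatz A 2 = 1 + M * collatz A 1 := by simp [collatz]
    exact ⟨hne, h1 ▸ (oddPart_eval A hA).1, h1 ▸ (oddPart_eval A hA).2,
      h2 ▸ step_ne_zero _ hne⟩
  | succ n ih =>
    obtain ⟨hne, h0, h1, hne2⟩ := ih
    have harith : 2 * (n + 1) + 1 = (2 * n + 2) + 1 := by ring
    have h3 : collatz A (2 * (n + 1) + 1) = oddPart (collatz A (2 * n + 2)) := by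
      rw [harith]; simp [collatz, Nat.add_mul_mod_self_left]
    have hne3 : collatz A (2 * (n + 1) + 1) ≠ 0 := h3 ▸ oddPart_ne_zero _ hne2
    have h4 : collatz A (2 * (n + 1) + 2) = 1 + M * collatz A (2 * (n + 1) + 1) := by
      have : 2 * (n + 1) + 2 = (2 * (n + 1) + 1) + 1 := by ring
      rw [this]; simp [collatz, Nat.mul_add_mod]
    exact ⟨hne3, h3 ▸ (oddPart_eval _ hne2).1, h3 ▸ (oddPart_eval _ hne2).2,
      h4 ▸ step_ne_zero _ hne3⟩

theorem eventually_constant_degrees (A : Polynomial (ZMod 2)) (hA : A ≠ 0) :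
    ∃ m p₁ p₂ : ℕ, 0 < m ∧ p₂ = p₁ + 2 ∧
      ∀ k ≥ m,
        (collatz A (2 * k + 1)).natDegree = p₁ ∧
        (collatz A (2 * k)).natDegree = p₂ ∧
        aSeq A (2 * k) = 1 ∧ bSeq A (2 * k) = 1 := by
  set d : ℕ → ℕ := fun k => (collatz A (2 * k + 1)).natDegree with hd
  -- structural equations
  have hodd := collatz_odd A hA
  have heq2 : ∀ k, collatz A (2 * (k + 1)) = 1 + M * collatz A (2 * k + 1) := by
    intro k
    have : 2 * (k + 1) = (2 * k + 1) + 1 := by ring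
    rw [this]; simp [collatz, Nat.mul_add_mod]
  have heq1 : ∀ k, collatz A (2 * (k + 1) + 1) = oddPart (collatz A (2 * (k + 1))) := by
    intro k
    have : 2 * (k + 1) + 1 = (2 * (k + 1)) + 1 := rfl
    simp [collatz, Nat.mul_mod_right]
  have hB_ne : ∀ k, collatz A (2 * (k + 1)) ≠ 0 := by
    intro k; rw [heq2 k]; exact step_ne_zero _ (hodd k).1
  have hBdeg : ∀ k, (collatz A (2 * (k + 1))).natDegree = d k + 2 := by
    intro k; rw [heq2 k]; exact step_natDegree _ (hodd k).1
  have hrm_pos : ∀ k, 1 ≤ (collatz A (2 * (k + 1))).rootMultiplicity 0 ∧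
      1 ≤ (collatz A (2 * (k + 1))).rootMultiplicity 1 := by
    intro k
    have hr := step_roots _ (hodd k).2.1 (hodd k).2.2.1
    rw [← heq2 k] at hr
    exact ⟨(rootMultiplicity_pos (hB_ne k)).2 hr.1, (rootMultiplicity_pos (hB_ne k)).2 hr.2⟩
  have hdeg_eq : ∀ k, d k + 2 = (collatz A (2 * (k + 1))).rootMultiplicity 0 +
      (collatz A (2 * (k + 1))).rootMultiplicity 1 + d (k + 1) := by
    intro k
    rw [← hBdeg k, hd]
    simp only
    rw [heq1 k]
    exact oddPart_natDegree _ (hB_ne k)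
  have hanti : ∀ k, d (k + 1) ≤ d k := by
    intro k
    have := hdeg_eq k
    have := hrm_pos k
    omega
  have hantige' : ∀ j k, d (j + k) ≤ d j := by
    intro j k
    induction k with
    | zero => exact le_refl _
    | succ n ih => exact le_trans (hanti (j + n)) ih
  have hantige : ∀ j k, j ≤ k → d k ≤ d j := by
    intro j k hjk
    have : k = j + (k - j) := by omega
    rw [this]
    exact hantige' j (k - j)
  -- pick the minimum of d
  have hne : (Set.range d).Nonempty := ⟨d 0, 0, rfl⟩
  obtain ⟨m₀, hm₀⟩ := Nat.sInf_mem hne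
  have hmin : ∀ k, d m₀ ≤ d k := by
    intro k
    rw [hm₀]
    exact Nat.sInf_le ⟨k, rfl⟩
  have hconst : ∀ k ≥ m₀, d k = d m₀ := fun k hk => le_antisymm (hantige m₀ k hk) (hmin k)
  refine ⟨m₀ + 1, d m₀, d m₀ + 2, by omega, rfl, ?_⟩
  intro k hk
  obtain ⟨j, rfl⟩ : ∃ j, k = j + 1 := ⟨k - 1, by omega⟩
  have hj : m₀ ≤ j := by omega
  have hdj : d j = d m₀ := hconst j hj
  have hdj1 : d (j + 1) = d m₀ := hconst (j + 1) (by omega)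
  have hab := hdeg_eq j
  have hpos := hrm_pos j
  have ha : (collatz A (2 * (j + 1))).rootMultiplicity 0 = 1 := by omega
  have hb : (collatz A (2 * (j + 1))).rootMultiplicity 1 = 1 := by omega
  exact ⟨hdj1, by rw [hBdeg j, hdj], by rwa [aSeq], by rwa [bSeq]⟩
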